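/- For the triangular lattice with φ₀ = 0 and φ_in = π, suppose even integers a, b and angles θ*, φ* satisfy 2 sinθ_in + sinθ₀ + a = −sinθ* cosφ* and (−a+2b)/√3 = −sinθ* sinφ*, with θ_in, θ₀, θ* ∈ (−π/2, π/2). Then a = b = 0. Consequently, the equations reduce to 2 sinθ_in + sinθ₀ = −sinθ* cosφ* and sinθ* sinφ* = 0. -/

import Mathlib

theorem stmt17 (a b : ℤ) (ha : Even a) (hb : Even b) (θin θ₀ θs φs : ℝ)
    (hin : θin ∈ Set.Ioo (-(Real.pi / 2)) (Real.pi / 2))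
    (h₀ : θ₀ ∈ Set.Ioo (-(Real.pi / 2)) (Real.pi / 2))
    (hs : θs ∈ Set.Ioo (-(Real.pi / 2)) (Real.pi / 2))
    (heq1 : 2 * Real.sin θin + Real.sin θ₀ + a = -(Real.sin θs * Real.cos φs))
    (heq2 : (-(a : ℝ) + 2 * b) / Real.sqrt 3 = -(Real.sin θs * Real.sin φs)) :
    a = 0 ∧ b = 0 ∧
    2 * Real.sin θin + Real.sin θ₀ = -(Real.sin θs * Real.cos φs) ∧
    Real.sin θs * Real.sin φs = 0 := by
  have hs3 : Real.sqrt 3 < 2 := by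
    rw [show (2:ℝ) = Real.sqrt 4 by rw [show (4:ℝ) = 2^2 by norm_num, Real.sqrt_sq]; norm_num]
    exact Real.sqrt_lt_sqrt (by norm_num) (by norm_num)
  have hs3pos : (0:ℝ) < Real.sqrt 3 := Real.sqrt_pos.mpr (by norm_num)
  -- bound |sin θs sin φs| ≤ 1
  have hb1 : |Real.sin θs * Real.sin φs| ≤ 1 := by
    rw [abs_mul]
    calc |Real.sin θs| * |Real.sin φs| ≤ 1 * 1 :=
      mul_le_mul (Real.abs_sin_le_one θs) (Real.abs_sin_le_one φs) (abs_nonneg _) zero_le_one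
    _ = 1 := one_mul 1
  have hab : |(-(a:ℝ) + 2*b)| ≤ Real.sqrt 3 := by
    have : |(-(a:ℝ) + 2*b) / Real.sqrt 3| ≤ 1 := by rw [heq2, abs_neg]; exact hb1
    rw [abs_div, abs_of_pos hs3pos, div_le_one hs3pos] at this
    exact this
  have hab2 : |(-(a:ℝ) + 2*b)| < 2 := lt_of_le_of_lt hab hs3
  have hz : -a + 2*b = 0 := by
    have h2 : |(-a + 2*b : ℤ)| < 2 := by
      have := hab2
      push_cast at this
      exact_mod_cast (by exact_mod_cast this : |((-a + 2*b : ℤ) : ℝ)| < 2)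
    rw [abs_lt] at h2
    obtain ⟨c, hc⟩ := ha
    omega
  have haeq : a = 2*b := by omega
  -- bound on heq1
  have hb2 : |Real.sin θs * Real.cos φs| ≤ 1 := by
    rw [abs_mul]
    calc |Real.sin θs| * |Real.cos φs| ≤ 1 * 1 :=
      mul_le_mul (Real.abs_sin_le_one θs) (Real.abs_cos_le_one φs) (abs_nonneg _) zero_le_one
    _ = 1 := one_mul 1
  have hsin_in : |Real.sin θin| < 1 := by
    rw [abs_lt]
    constructor
    · have := Real.sin_lt_sin_of_lt_of_le_pi_div_two (by linarith [hin.1] : -(Real.pi/2) ≤ -(Real.pi/2)) (le_of_lt hin.2) hin.1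
      rw [Real.sin_neg, Real.sin_pi_div_two] at this; linarith
    · have := Real.sin_lt_sin_of_lt_of_le_pi_div_two (le_of_lt hin.1) le_rfl hin.2
      rw [Real.sin_pi_div_two] at this; linarith
  have hsin0 : |Real.sin θ₀| < 1 := by
    rw [abs_lt]
    constructor
    · have := Real.sin_lt_sin_of_lt_of_le_pi_div_two (by linarith [h₀.1] : -(Real.pi/2) ≤ -(Real.pi/2)) (le_of_lt h₀.2) h₀.1
      rw [Real.sin_neg, Real.sin_pi_div_two] at this; linarith
    · have := Real.sin_lt_sin_of_lt_of_le_pi_div_two (le_of_lt h₀.1) le_rfl h₀.2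
      rw [Real.sin_pi_div_two] at this; linarith
  have hA : |(a:ℝ)| < 4 := by
    have h1 : |2 * Real.sin θin + Real.sin θ₀ + a| ≤ 1 := by rw [heq1, abs_neg]; exact hb2
    have := abs_lt.mp hsin_in
    have := abs_lt.mp hsin0
    have := abs_le.mp h1
    rw [abs_lt]; constructor <;> linarith
  have ha4 : |a| < 4 := by exact_mod_cast hA
  rw [abs_lt] at ha4
  obtain ⟨c, hc⟩ := hb
  have ha0 : a = 0 := by omega
  have hb0 : b = 0 := by omega
  subst ha0 hb0
  push_cast at heq1 heq2
  refine ⟨rfl, rfl, by linarith, by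
    have := heq2
    field_simp at this
    exact (mul_eq_zero.mp (by linarith : Real.sqrt 3 * (Real.sin θs * Real.sin φs) = 0)).resolve_left hs3pos.ne'⟩
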